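/- Fix κ>0, ν∈(−1,1/2], γ>0 and C² functions f_rad,g:(0,∞)→ℝ with f_rad(1)=0, f'_rad(1)=(1−ν)/(1+ν), g(1)=0, g'(1)=1, and define p̂_rad(δ,η)=κ(3f_rad(δ/η)η^γ+g(η)) on (0,∞)². If there exists y_b>0 such that the map η↦p̂_rad(y_b η,η) is constant on (0,∞), then f_rad(y_b)=−1/(3γ) and g(η)=(η^γ−1)/γ for all η>0. If moreover f'_rad(y)>0 for all y>0, then such a y_b is unique. -/
import Mathlib


open Real Set Filter Topology

noncomputable section

/-- The scale-invariant radial pressure `p̂_rad(δ,η) = κ(3 f_rad(δ/η) η^γ + g(η))`. -/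
def siPrad (κ γ : ℝ) (frad g : ℝ → ℝ) : ℝ → ℝ → ℝ :=
  fun δ η => κ * (3 * frad (δ / η) * η ^ γ + g η)

/-- Constant Boundary Shear: if `η ↦ p̂_rad(y_b η, η)` is constant on `(0,∞)` for some
`y_b > 0`, then `f_rad(y_b) = −1/(3γ)` and `g(η) = (η^γ − 1)/γ`; if moreover
`f'_rad > 0` on `(0,∞)`, such a `y_b` is unique. -/
theorem cbs_characterization (κ ν γ : ℝ) (hκ : 0 < κ)
    (hν : ν ∈ Ioc (-1 : ℝ) (1/2)) (hγ : 0 < γ)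
    (frad g : ℝ → ℝ)
    (hfr : ContDiffOn ℝ 2 frad (Ioi 0)) (hg : ContDiffOn ℝ 2 g (Ioi 0))
    (hfr1 : frad 1 = 0) (hfr1' : deriv frad 1 = (1 - ν) / (1 + ν))
    (hg1 : g 1 = 0) (hg1' : deriv g 1 = 1) :
    (∀ yb : ℝ, 0 < yb →
      (∀ η : ℝ, 0 < η → siPrad κ γ frad g (yb * η) η = siPrad κ γ frad g yb 1) →
      frad yb = -(1 / (3 * γ)) ∧ ∀ η : ℝ, 0 < η → g η = (η ^ γ - 1) / γ) ∧
    ((∀ y : ℝ, 0 < y → 0 < deriv frad y) →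
      ∀ yb₁ yb₂ : ℝ, 0 < yb₁ → 0 < yb₂ →
      (∀ η : ℝ, 0 < η → siPrad κ γ frad g (yb₁ * η) η = siPrad κ γ frad g yb₁ 1) →
      (∀ η : ℝ, 0 < η → siPrad κ γ frad g (yb₂ * η) η = siPrad κ γ frad g yb₂ 1) →
      yb₁ = yb₂) := by
  have key : ∀ yb : ℝ, 0 < yb →
      (∀ η : ℝ, 0 < η → siPrad κ γ frad g (yb * η) η = siPrad κ γ frad g yb 1) →
      frad yb = -(1 / (3 * γ)) ∧ ∀ η : ℝ, 0 < η → g η = (η ^ γ - 1) / γ := by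
    intro yb hyb hconst
    have hgeq : ∀ η : ℝ, 0 < η → g η = 3 * frad yb * (1 - η ^ γ) := by
      intro η hη
      have h := hconst η hη
      simp only [siPrad] at h
      rw [mul_div_assoc, div_self hη.ne', mul_one, div_one, Real.one_rpow, hg1] at h
      have := mul_left_cancel₀ hκ.ne' h
      linarith
    have hev : g =ᶠ[𝓝 (1:ℝ)] fun η => 3 * frad yb * (1 - η ^ γ) := by
      filter_upwards [Ioi_mem_nhds (by norm_num : (0:ℝ) < 1)] with η hη
      exact hgeq η hη
    have hderiv : HasDerivAt (fun η : ℝ => 3 * frad yb * (1 - η ^ γ))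
        (3 * frad yb * (0 - γ * (1:ℝ) ^ (γ - 1))) 1 :=
      ((hasDerivAt_const _ _).sub
        (Real.hasDerivAt_rpow_const (Or.inl one_ne_zero))).const_mul _
    have hd : deriv g 1 = 3 * frad yb * (0 - γ * (1:ℝ) ^ (γ - 1)) := by
      rw [Filter.EventuallyEq.deriv_eq hev]
      exact hderiv.deriv
    rw [hg1', Real.one_rpow] at hd
    have hval : frad yb = -(1 / (3 * γ)) := by
      field_simp at hd ⊢
      nlinarith
    refine ⟨hval, fun η hη => ?_⟩
    rw [hgeq η hη, hval]
    field_simp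
    ring
  refine ⟨key, ?_⟩
  intro hpos yb₁ yb₂ h1 h2 hc1 hc2
  have e1 := (key yb₁ h1 hc1).1
  have e2 := (key yb₂ h2 hc2).1
  have hmono : StrictMonoOn frad (Ioi 0) := by
    apply strictMonoOn_of_deriv_pos (convex_Ioi 0) hfr.continuousOn
    intro x hx
    rw [interior_Ioi] at hx
    exact hpos x hx
  exact hmono.injOn h1 h2 (e1.trans e2.symm)
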